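/- If the teacher is perfectly accurate in the sense that G(X_1, f̂(X_1)) = G(X_1, Y_1) almost surely, then with probability at least 1 − δ the doubly robust gradient satisfies ‖G_DR‖₂ ≤ √(E[‖G(X_1, Y_1)‖₂²] / ((m+n)·δ)); i.e., the effective sample size is m+n rather than n. -/

import Mathlib

open MeasureTheory ProbabilityTheory Finset
open scoped ENNReal

theorem chebyshev_mean_zero
    {Ω : Type*} [MeasurableSpace Ω] (μ : Measure Ω) [IsProbabilityMeasure μ]
    {d N : ℕ} (δ : ℝ) (hδ0 : 0 < δ)
    (Z : Fin N → Ω → EuclideanSpace ℝ (Fin d)) (i0 : Fin N)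
    (hZmeas : ∀ i, Measurable (Z i))
    (hindep : Pairwise fun i j : Fin N => IndepFun (Z i) (Z j) μ)
    (hident : ∀ i, IdentDistrib (Z i) (Z i0) μ μ)
    (h2 : MemLp (Z i0) 2 μ)
    (hmean : (∫ ω, Z i0 ω ∂μ) = 0) :
    ENNReal.ofReal (1 - δ) ≤
      μ {ω | ‖(N:ℝ)⁻¹ • ∑ i, Z i ω‖
        ≤ Real.sqrt ((∫ ω, ‖Z i0 ω‖^2 ∂μ) / ((N:ℝ) * δ))} := by
  classical
  have hNpos : 0 < N := i0.pos
  have hNR : (0:ℝ) < (N:ℝ) := by exact_mod_cast hNpos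
  set E : ℝ := ∫ ω, ‖Z i0 ω‖^2 ∂μ with hE
  set t : ℝ := Real.sqrt (E / ((N:ℝ) * δ)) with ht
  have ht0 : 0 ≤ t := Real.sqrt_nonneg _
  -- basic facts
  have hZ2 : ∀ i, MemLp (Z i) 2 μ := fun i => (hident i).memLp_iff.2 h2
  set W : Fin d → Fin N → Ω → ℝ := fun k i ω => Z i ω k with hW
  have hW2 : ∀ k i, MemLp (W k i) 2 μ := fun k i =>
    (EuclideanSpace.proj k : EuclideanSpace ℝ (Fin d) →L[ℝ] ℝ).comp_memLp' (hZ2 i)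
  have hWid : ∀ k i, IdentDistrib (W k i) (W k i0) μ μ := fun k i =>
    (hident i).comp (EuclideanSpace.proj k : EuclideanSpace ℝ (Fin d) →L[ℝ] ℝ).continuous.measurable
  have hWmean : ∀ k i, (∫ ω, W k i ω ∂μ) = 0 := by
    intro k i
    rw [(hWid k i).integral_eq]
    have : (∫ ω, W k i0 ω ∂μ) = (∫ ω, Z i0 ω ∂μ) k :=
      (EuclideanSpace.proj k : EuclideanSpace ℝ (Fin d) →L[ℝ] ℝ).integral_comp_comm
        (h2.integrable one_le_two)
    rw [this, hmean]; rfl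
  have hWsq : ∀ k i, (∫ ω, (W k i ω)^2 ∂μ) = ∫ ω, (W k i0 ω)^2 ∂μ := fun k i =>
    ((hWid k i).comp (measurable_id.pow_const 2)).integral_eq
  have hWindep : ∀ k, Set.Pairwise ↑(univ : Finset (Fin N))
      (fun i j => IndepFun (W k i) (W k j) μ) := by
    intro k i _ j _ hij
    exact (hindep hij).comp
      (EuclideanSpace.proj k : EuclideanSpace ℝ (Fin d) →L[ℝ] ℝ).continuous.measurable
      (EuclideanSpace.proj k : EuclideanSpace ℝ (Fin d) →L[ℝ] ℝ).continuous.measurable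
  -- second moment of each component sum
  have hTsum : ∀ k, (∫ ω, (∑ i, W k i ω)^2 ∂μ) = N * ∫ ω, (W k i0 ω)^2 ∂μ := by
    intro k
    have hsum2 : MemLp (∑ i, W k i) 2 μ := memLp_finset_sum' _ (fun i _ => hW2 k i)
    have hv : variance (∑ i, W k i) μ = ∑ i : Fin N, variance (W k i) μ :=
      IndepFun.variance_sum (fun i _ => hW2 k i) (hWindep k)
    have hvar : ∀ i, variance (W k i) μ = ∫ ω, (W k i ω)^2 ∂μ := by
      intro i
      rw [variance_eq_sub (hW2 k i), hWmean k i]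
      simp [Pi.pow_apply]
    have hmean' : (∫ ω, (∑ i, W k i) ω ∂μ) = 0 := by
      have : (∫ ω, (∑ i, W k i) ω ∂μ) = ∑ i, ∫ ω, W k i ω ∂μ := by
        simp only [Finset.sum_apply]
        exact integral_finset_sum _ (fun i _ => (hW2 k i).integrable one_le_two)
      rw [this]; simp [hWmean k]
    have := variance_eq_sub hsum2
    rw [hv, hmean'] at this
    have h1 : (∫ ω, (∑ i, W k i ω)^2 ∂μ) = ∑ i : Fin N, variance (W k i) μ := by
      rw [this]
      simp only [Pi.pow_apply, Finset.sum_apply, ne_eq, OfNat.ofNat_ne_zero,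
        not_false_eq_true, zero_pow, sub_zero]
    rw [h1]
    simp only [hvar, hWsq k]
    simp [Finset.sum_const, nsmul_eq_mul]
  -- squared norm identity
  have hnormv : ∀ v : EuclideanSpace ℝ (Fin d), ‖v‖^2 = ∑ k, (v k)^2 := by
    intro v
    rw [EuclideanSpace.norm_eq, Real.sq_sqrt (by positivity)]
    simp [sq_abs]
  have hSk : ∀ ω (k : Fin d), (∑ i, Z i ω) k = ∑ i, W k i ω := by
    intro ω k
    exact map_sum (EuclideanSpace.proj k : EuclideanSpace ℝ (Fin d) →L[ℝ] ℝ)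
      (fun i => Z i ω) univ
  have hnormS : ∀ ω, ‖∑ i, Z i ω‖^2 = ∑ k, (∑ i, W k i ω)^2 := by
    intro ω
    rw [hnormv]
    exact Finset.sum_congr rfl fun k _ => by rw [hSk]
  have hWint2 : ∀ (k : Fin d) i, Integrable (fun ω => (W k i ω)^2) μ := by
    intro k i
    simpa [Pi.pow_apply] using (hW2 k i).integrable_sq
  have hTk2int : ∀ k : Fin d, Integrable (fun ω => (∑ i, W k i ω)^2) μ := by
    intro k
    have := (memLp_finset_sum' univ (fun i (_ : i ∈ univ) => hW2 k i)).integrable_sq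
    simpa [Pi.pow_apply, Finset.sum_apply] using this
  have hSsq : (∫ ω, ‖∑ i, Z i ω‖^2 ∂μ) = N * E := by
    calc (∫ ω, ‖∑ i, Z i ω‖^2 ∂μ) = ∫ ω, ∑ k, (∑ i, W k i ω)^2 ∂μ := by
          simp only [hnormS]
      _ = ∑ k : Fin d, ∫ ω, (∑ i, W k i ω)^2 ∂μ :=
          integral_finset_sum _ (fun k _ => hTk2int k)
      _ = ∑ k : Fin d, (N : ℝ) * ∫ ω, (W k i0 ω)^2 ∂μ := by simp only [hTsum]
      _ = (N:ℝ) * ∑ k : Fin d, ∫ ω, (W k i0 ω)^2 ∂μ := by rw [Finset.mul_sum]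
      _ = (N:ℝ) * ∫ ω, ∑ k, (W k i0 ω)^2 ∂μ := by
          rw [integral_finset_sum _ (fun k _ => hWint2 k i0)]
      _ = N * E := by
          rw [hE]
          congr 1
          exact integral_congr_ae
            (Filter.Eventually.of_forall fun ω => (hnormv (Z i0 ω)).symm)
  -- the averaged squared norm
  set g : Ω → ℝ := fun ω => ‖(N:ℝ)⁻¹ • ∑ i, Z i ω‖^2 with hg
  have hgval : ∀ ω, g ω = ((N:ℝ)⁻¹)^2 * ‖∑ i, Z i ω‖^2 := by
    intro ω
    rw [hg]
    simp only [norm_smul, mul_pow, Real.norm_eq_abs, sq_abs]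
  have hSint : Integrable (fun ω => ‖∑ i, Z i ω‖^2) μ := by
    have : (fun ω => ‖∑ i, Z i ω‖^2) = fun ω => ∑ k, (∑ i, W k i ω)^2 := funext hnormS
    rw [this]
    exact integrable_finset_sum _ (fun k _ => hTk2int k)
  have hgint : Integrable g μ := by
    have : g = fun ω => ((N:ℝ)⁻¹)^2 * ‖∑ i, Z i ω‖^2 := funext hgval
    rw [this]
    exact hSint.const_mul _
  have hgintval : (∫ ω, g ω ∂μ) = E / N := by
    calc (∫ ω, g ω ∂μ) = ∫ ω, ((N:ℝ)⁻¹)^2 * ‖∑ i, Z i ω‖^2 ∂μ := by simp only [hgval]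
      _ = ((N:ℝ)⁻¹)^2 * ∫ ω, ‖∑ i, Z i ω‖^2 ∂μ := integral_const_mul _ _
      _ = ((N:ℝ)⁻¹)^2 * (N * E) := by rw [hSsq]
      _ = E / N := by field_simp
  have hE0 : 0 ≤ E := integral_nonneg fun ω => by positivity
  -- measurability of the target set
  have hSmeas : Measurable fun ω => ∑ i, Z i ω :=
    Finset.measurable_sum univ (fun i _ => hZmeas i)
  have havgmeas : Measurable fun ω => (N:ℝ)⁻¹ • ∑ i, Z i ω := hSmeas.const_smul ((N:ℝ)⁻¹)
  have hA : MeasurableSet {ω | ‖(N:ℝ)⁻¹ • ∑ i, Z i ω‖ ≤ t} :=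
    measurableSet_le havgmeas.norm measurable_const
  rcases eq_or_lt_of_le hE0 with hEz | hEpos
  · -- degenerate case: E = 0, so all Z i vanish a.s.
    have hZ0sq : (fun ω => ‖Z i0 ω‖^2) =ᵐ[μ] 0 := by
      have hint : Integrable (fun ω => ‖Z i0 ω‖^2) μ := by
        simpa [Pi.pow_apply] using h2.norm.integrable_sq
      exact (integral_eq_zero_iff_of_nonneg (fun ω => by positivity) hint).1 hEz.symm
    have hZ0 : ∀ᵐ ω ∂μ, Z i0 ω = 0 := by
      filter_upwards [hZ0sq] with ω hω
      have : ‖Z i0 ω‖^2 = 0 := hω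
      have h2' : ‖Z i0 ω‖ = 0 := by
        have hh := (pow_eq_zero_iff (two_ne_zero)).mp this
        exact hh
      exact norm_eq_zero.1 h2'
    have hZi0 : ∀ i, ∀ᵐ ω ∂μ, Z i ω = 0 := by
      intro i
      have hmm : μ {ω | Z i ω ∈ ({0}ᶜ : Set (EuclideanSpace ℝ (Fin d)))}
          = μ {ω | Z i0 ω ∈ ({0}ᶜ : Set (EuclideanSpace ℝ (Fin d)))} :=
        (hident i).measure_mem_eq (measurableSet_singleton 0).compl
      have h0 : μ {ω | Z i0 ω ∈ ({0}ᶜ : Set (EuclideanSpace ℝ (Fin d)))} = 0 := by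
        have := ae_iff.1 hZ0
        simpa [Set.mem_compl_iff] using this
      rw [ae_iff]
      simpa [Set.mem_compl_iff] using hmm.trans h0
    have hall : ∀ᵐ ω ∂μ, ∀ i, Z i ω = 0 := (ae_all_iff).2 hZi0
    have hmem : ∀ᵐ ω ∂μ, ω ∈ {ω | ‖(N:ℝ)⁻¹ • ∑ i, Z i ω‖ ≤ t} := by
      filter_upwards [hall] with ω hω
      have : (∑ i, Z i ω) = 0 := Finset.sum_eq_zero fun i _ => hω i
      simp only [Set.mem_setOf_eq, this, smul_zero, norm_zero]
      exact ht0
    have : μ {ω | ‖(N:ℝ)⁻¹ • ∑ i, Z i ω‖ ≤ t} = 1 := by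
      rw [← measure_univ (μ := μ)]
      apply measure_congr
      rw [Filter.eventuallyEq_set]
      filter_upwards [hmem] with ω hω
      simp [hω]
    rw [this]
    exact ENNReal.ofReal_le_one.2 (by linarith [hδ0])
  · -- main case: Chebyshev/Markov
    have hNδ : (0:ℝ) < (N:ℝ) * δ := mul_pos hNR hδ0
    have htsq : t^2 = E / ((N:ℝ) * δ) := Real.sq_sqrt (le_of_lt (div_pos hEpos hNδ))
    have htpos : 0 < t := Real.sqrt_pos.2 (div_pos hEpos hNδ)
    have hmarkov := mul_meas_ge_le_integral_of_nonneg
      (Filter.Eventually.of_forall fun ω => by positivity) hgint (t^2)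
    rw [hgintval] at hmarkov
    have htoReal : (μ {x | t^2 ≤ g x}).toReal ≤ δ := by
      have ht2 : 0 < t^2 := by positivity
      have h1 : (μ {x | t^2 ≤ g x}).toReal ≤ (E / N) / t^2 := by
        rw [le_div_iff₀ ht2]
        simp only [measureReal_def] at hmarkov
        nlinarith [hmarkov]
      refine h1.trans (le_of_eq ?_)
      rw [htsq]
      have hE' : E ≠ 0 := ne_of_gt hEpos
      have hN' : (N:ℝ) ≠ 0 := ne_of_gt hNR
      field_simp
    have hsub : {ω | ‖(N:ℝ)⁻¹ • ∑ i, Z i ω‖ ≤ t}ᶜ ⊆ {x | t^2 ≤ g x} := by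
      intro ω hω
      simp only [Set.mem_compl_iff, Set.mem_setOf_eq, not_le] at hω
      have : t^2 ≤ ‖(N:ℝ)⁻¹ • ∑ i, Z i ω‖^2 :=
        pow_le_pow_left₀ ht0 (le_of_lt hω) 2
      exact this
    have hcompl : μ {ω | ‖(N:ℝ)⁻¹ • ∑ i, Z i ω‖ ≤ t}ᶜ ≤ ENNReal.ofReal δ := by
      refine le_trans (measure_mono hsub) ?_
      exact (ENNReal.le_ofReal_iff_toReal_le (measure_ne_top μ _) hδ0.le).2 htoReal
    have hsum := measure_add_measure_compl (μ := μ) hA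
    rw [measure_univ] at hsum
    have h1le : (1:ℝ≥0∞) ≤ μ {ω | ‖(N:ℝ)⁻¹ • ∑ i, Z i ω‖ ≤ t} + ENNReal.ofReal δ := by
      rw [← hsum]
      exact add_le_add_right hcompl _
    calc ENNReal.ofReal (1 - δ) = 1 - ENNReal.ofReal δ := by
          rw [ENNReal.ofReal_sub _ hδ0.le, ENNReal.ofReal_one]
      _ ≤ μ {ω | ‖(N:ℝ)⁻¹ • ∑ i, Z i ω‖ ≤ t} := tsub_le_iff_right.2 h1le

/-- If the teacher is perfectly accurate, i.e. `G(X₁, f̂(X₁)) = G(X₁, Y₁)` almost surely,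
then with probability at least `1 − δ` the doubly robust gradient satisfies
`‖G_DR‖₂ ≤ √(E[‖G(X₁,Y₁)‖²]/((m+n)δ))`: the effective sample size is `m+n`. -/
theorem doubly_robust_gradient_bound_perfect_teacher
    {Ω : Type*} [MeasurableSpace Ω] (μ : Measure Ω) [IsProbabilityMeasure μ]
    {𝒳 𝒴 : Type*} [MeasurableSpace 𝒳] [MeasurableSpace 𝒴]
    (m n d : ℕ) (hm : 0 < m) (hn : 0 < n) (hd : 0 < d)
    (δ : ℝ) (hδ0 : 0 < δ) (hδ1 : δ < 1)
    (X : Fin (m + n) → Ω → 𝒳) (Y : Fin (m + n) → Ω → 𝒴)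
    (hXmeas : ∀ i, Measurable (X i)) (hYmeas : ∀ i, Measurable (Y i))
    (h_indep : iIndepFun
      (fun i ω => (X i ω, Y i ω)) μ)
    (h_ident : ∀ i : Fin (m + n),
      IdentDistrib (fun ω => (X i ω, Y i ω))
        (fun ω => (X ⟨0, by omega⟩ ω, Y ⟨0, by omega⟩ ω)) μ μ)
    (f : 𝒳 → 𝒴) (hf : Measurable f)
    (G : 𝒳 × 𝒴 → EuclideanSpace ℝ (Fin d)) (hG : Measurable G)
    (hGf2 : MemLp (fun ω => G (X ⟨0, by omega⟩ ω, f (X ⟨0, by omega⟩ ω))) 2 μ)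
    (hGY2 : MemLp (fun ω => G (X ⟨0, by omega⟩ ω, Y ⟨0, by omega⟩ ω)) 2 μ)
    (hopt : (∫ ω, G (X ⟨0, by omega⟩ ω, Y ⟨0, by omega⟩ ω) ∂μ) = 0)
    (haccurate : ∀ᵐ ω ∂μ,
      G (X ⟨0, by omega⟩ ω, f (X ⟨0, by omega⟩ ω))
        = G (X ⟨0, by omega⟩ ω, Y ⟨0, by omega⟩ ω)) :
    ENNReal.ofReal (1 - δ) ≤
      μ {ω | ‖((m + n : ℝ))⁻¹ • (∑ i : Fin (m + n), G (X i ω, f (X i ω)))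
          + ((n : ℝ))⁻¹ • ∑ i ∈ Finset.univ.filter (fun i : Fin (m + n) => m ≤ (i : ℕ)),
              (G (X i ω, Y i ω) - G (X i ω, f (X i ω)))‖
        ≤ Real.sqrt ((∫ ω, ‖G (X ⟨0, by omega⟩ ω, Y ⟨0, by omega⟩ ω)‖ ^ 2 ∂μ)
            / ((m + n : ℝ) * δ))} := by
  classical
  have hNpos : 0 < m + n := by omega
  let i0 : Fin (m + n) := ⟨0, hNpos⟩
  set Z : Fin (m + n) → Ω → EuclideanSpace ℝ (Fin d) := fun i ω => G (X i ω, Y i ω) with hZ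
  have hZmeas : ∀ i, Measurable (Z i) := fun i => hG.comp ((hXmeas i).prodMk (hYmeas i))
  have hindep : Pairwise fun i j : Fin (m + n) => IndepFun (Z i) (Z j) μ :=
    fun i j hij => (h_indep.indepFun hij).comp hG hG
  have hident : ∀ i, IdentDistrib (Z i) (Z i0) μ μ := fun i => (h_ident i).comp hG
  have h2 : MemLp (Z i0) 2 μ := hGY2
  have hmean : (∫ ω, Z i0 ω ∂μ) = 0 := hopt
  have key := chebyshev_mean_zero μ δ hδ0 Z i0 hZmeas hindep hident h2 hmean
  -- almost-sure equality of the teacher and true gradients, for every index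
  set D : 𝒳 × 𝒴 → EuclideanSpace ℝ (Fin d) := fun p => G (p.1, f p.1) - G p with hD
  have hDmeas : Measurable D :=
    (hG.comp (measurable_fst.prodMk (hf.comp measurable_fst))).sub hG
  have haeq : ∀ i : Fin (m + n), ∀ᵐ ω ∂μ,
      G (X i ω, f (X i ω)) = G (X i ω, Y i ω) := by
    intro i
    have hid : IdentDistrib (fun ω => D (X i ω, Y i ω)) (fun ω => D (X i0 ω, Y i0 ω)) μ μ :=
      (h_ident i).comp hDmeas
    have h0' : ∀ᵐ ω ∂μ, D (X i0 ω, Y i0 ω) = 0 := by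
      filter_upwards [haccurate] with ω hω
      have hω' : G (X i0 ω, f (X i0 ω)) = G (X i0 ω, Y i0 ω) := hω
      show G (X i0 ω, f (X i0 ω)) - G (X i0 ω, Y i0 ω) = 0
      rw [hω', sub_self]
    have h0 : μ {ω | D (X i0 ω, Y i0 ω) ∈ ({0}ᶜ : Set (EuclideanSpace ℝ (Fin d)))} = 0 := by
      have := ae_iff.1 h0'
      simpa [Set.mem_compl_iff] using this
    have hmm := hid.measure_mem_eq (s := ({0}ᶜ : Set (EuclideanSpace ℝ (Fin d))))
      (measurableSet_singleton 0).compl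
    have hz : μ {ω | ¬ D (X i ω, Y i ω) = 0} = 0 := by
      exact hmm.trans h0
    filter_upwards [ae_iff.2 hz] with ω hω
    exact sub_eq_zero.1 hω
  have hall : ∀ᵐ ω ∂μ, ∀ i : Fin (m + n),
      G (X i ω, f (X i ω)) = G (X i ω, Y i ω) := ae_all_iff.2 haeq
  refine le_trans key (measure_mono_ae ?_)
  filter_upwards [hall] with ω hω hs
  have h1 : (∑ i : Fin (m + n), G (X i ω, f (X i ω))) = ∑ i, Z i ω :=
    Finset.sum_congr rfl fun i _ => hω i
  have h2' : (∑ i ∈ Finset.univ.filter (fun i : Fin (m + n) => m ≤ (i : ℕ)),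
      (G (X i ω, Y i ω) - G (X i ω, f (X i ω))))
      = (0 : EuclideanSpace ℝ (Fin d)) :=
    Finset.sum_eq_zero fun i _ => by rw [hω i, sub_self]
  have hcast : ((m : ℝ) + n) = ((m + n : ℕ) : ℝ) := by push_cast; ring
  have hs' : ‖(((m + n : ℕ) : ℝ))⁻¹ • ∑ i, Z i ω‖ ≤
      Real.sqrt ((∫ ω, ‖Z i0 ω‖ ^ 2 ∂μ) / (((m + n : ℕ) : ℝ) * δ)) := hs
  show ‖((m:ℝ) + n)⁻¹ • (∑ i : Fin (m + n), G (X i ω, f (X i ω)))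
      + ((n : ℝ))⁻¹ • ∑ i ∈ Finset.univ.filter (fun i : Fin (m + n) => m ≤ (i : ℕ)),
          (G (X i ω, Y i ω) - G (X i ω, f (X i ω)))‖
      ≤ Real.sqrt ((∫ ω, ‖Z i0 ω‖ ^ 2 ∂μ) / (((m:ℝ) + n) * δ))
  rw [h1, h2', smul_zero, add_zero, hcast]
  exact hs'
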